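/- arXiv:1204.2013 — 4 statements merged into one kernel-verified Lean document; each statement's English description precedes it below -/
import Mathlib

section
/- The inclusion of the full subcategory of Segal precategories (bisimplicial sets X with X_0 discrete) into all bisimplicial sets has a left adjoint, the reduction functor, which on X collapses X_0 to its set of path components π₀(X_0) and pushes out accordingly: (X)_r is the pushout of cosk-type data making ((X)_r)_0 = π₀(X_0). -/
open CategoryTheory Simplicial Opposite

/-- A simplicial set is discrete if it is (isomorphic to) a constant functor on a set,
i.e. all face and degeneracy maps are identities. -/
def SSet.IsDiscrete (X : SSet.{0}) : Prop :=
  ∃ S : Type, Nonempty (X ≅ (Functor.const SimplexCategoryᵒᵖ).obj S)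

/-- A Segal precategory is a bisimplicial set (functor `Δᵒᵖ → SSet`) whose simplicial set
in degree zero is discrete. -/
def IsSegalPrecat (X : SimplicialObject SSet.{0}) : Prop :=
  SSet.IsDiscrete (X.obj (op ⦋0⦌))

/-- The category of Segal precategories, as a full subcategory of bisimplicial sets. -/
abbrev SegalPrecat := ObjectProperty.FullSubcategory IsSegalPrecat

/-- The set of path components of a simplicial set. -/
def SSet.pi0 (X : SSet.{0}) : Type :=
  Quot (fun a b : X _⦋0⦌ => ∃ e : X _⦋1⦌, X.δ 1 e = a ∧ X.δ 0 e = b)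

namespace SegalAux

open SimplexCategory


/-- edge from vertex i to vertex j -/
def edgeHom {m : SimplexCategory} (i j : Fin (m.len + 1)) (h : i ≤ j) :
    (⦋1⦌ : SimplexCategory) ⟶ m :=
  SimplexCategory.Hom.mk
    ⟨fun t => if t = 0 then i else j, by
      intro a b hab
      fin_cases a <;> fin_cases b <;> simp_all⟩

lemma edge_d1 {m : SimplexCategory} (i j : Fin (m.len + 1)) (h : i ≤ j) :
    SimplexCategory.δ (1 : Fin 2) ≫ edgeHom i j h = const ⦋0⦌ m i :=
  Hom.ext_zero_left _ _ rfl

lemma edge_d0 {m : SimplexCategory} (i j : Fin (m.len + 1)) (h : i ≤ j) :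
    SimplexCategory.δ (0 : Fin 2) ≫ edgeHom i j h = const ⦋0⦌ m j :=
  Hom.ext_zero_left _ _ rfl

variable (K : SSet.{0})

/-- class of vertex i of a simplex -/
def prAt {m : SimplexCategory} (i : Fin (m.len + 1)) (x : K.obj (op m)) : K.pi0 :=
  Quot.mk _ (K.map (const ⦋0⦌ m i).op x)

lemma prAt_eq {m : SimplexCategory} (i j : Fin (m.len + 1)) (x : K.obj (op m)) :
    prAt K i x = prAt K j x := by
  have step : ∀ (i j : Fin (m.len + 1)), i ≤ j → prAt K i x = prAt K j x := by
    intro i j h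
    apply Quot.sound
    refine ⟨K.map (edgeHom i j h).op x, ?_, ?_⟩
    · show K.map (SimplexCategory.δ (1 : Fin 2)).op (K.map (edgeHom i j h).op x) = _
      rw [← FunctorToTypes.map_comp_apply, ← op_comp, edge_d1]
    · show K.map (SimplexCategory.δ (0 : Fin 2)).op (K.map (edgeHom i j h).op x) = _
      rw [← FunctorToTypes.map_comp_apply, ← op_comp, edge_d0]
  rcases le_total i j with h | h
  · exact step i j h
  · exact (step j i h).symm

/-- class of a simplex in pi0 -/
def pr {m : SimplexCategory} (x : K.obj (op m)) : K.pi0 :=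
  prAt K 0 x

lemma pr_nat {m m' : SimplexCategory} (θ : m' ⟶ m) (x : K.obj (op m)) :
    pr K (K.map θ.op x) = pr K x := by
  show prAt K 0 _ = _
  unfold prAt
  rw [← FunctorToTypes.map_comp_apply, ← op_comp]
  rw [show const ⦋0⦌ m' 0 ≫ θ = const ⦋0⦌ m (θ.toOrderHom 0) from rfl]
  exact prAt_eq K _ 0 x

lemma pr_zero (x : K _⦋0⦌) : pr K x = Quot.mk _ x := by
  unfold pr prAt
  rw [const_eq_id, op_id, FunctorToTypes.map_id_apply]


/-- functoriality of pi0 -/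
def pi0Map {K K' : SSet.{0}} (g : K ⟶ K') : K.pi0 → K'.pi0 :=
  Quot.lift (fun v => Quot.mk _ (g.app (op ⦋0⦌) v)) (by
    rintro a b ⟨e, ha, hb⟩
    apply Quot.sound
    refine ⟨g.app (op ⦋1⦌) e, ?_, ?_⟩
    · show K'.map (SimplexCategory.δ (1 : Fin 2)).op (g.app (op ⦋1⦌) e) = _
      rw [← FunctorToTypes.naturality, ← ha]
      rfl
    · show K'.map (SimplexCategory.δ (0 : Fin 2)).op (g.app (op ⦋1⦌) e) = _
      rw [← FunctorToTypes.naturality, ← hb]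
      rfl)

lemma pr_map {K K' : SSet.{0}} (g : K ⟶ K') {m : SimplexCategory} (x : K.obj (op m)) :
    pi0Map g (pr K x) = pr K' (g.app (op m) x) := by
  show Quot.mk _ (g.app (op ⦋0⦌) (K.map (const ⦋0⦌ m 0).op x)) = _
  rw [FunctorToTypes.naturality]
  rfl


variable (X : SimplicialObject SSet.{0})

/-- degeneracy from degree 0 to degree n in the outer direction -/
def toDeg (n : SimplexCategory) : X.obj (op ⦋0⦌) ⟶ X.obj (op n) :=
  X.map (const n ⦋0⦌ 0).op

lemma toDeg_comp {n n' : SimplexCategory} (θ : n' ⟶ n) :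
    toDeg X n ≫ X.map θ.op = toDeg X n' := by
  unfold toDeg
  rw [← X.map_comp, ← op_comp, eq_const_to_zero (θ ≫ const n ⦋0⦌ 0)]

lemma toDeg_zero : toDeg X ⦋0⦌ = 𝟙 _ := by
  unfold toDeg
  rw [const_eq_id, op_id, X.map_id]

lemma toDeg_naturality {n : SimplexCategory} {W W' : SimplexCategoryᵒᵖ} (ψ : W ⟶ W')
    (a : (X.obj (op ⦋0⦌)).obj W) :
    (X.obj (op n)).map ψ ((toDeg X n).app W a) = (toDeg X n).app W' ((X.obj (op ⦋0⦌)).map ψ a) :=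
  (FunctorToTypes.naturality (toDeg X n) ψ a).symm

/-- the relation defining the reduction -/
def rel (Z W : SimplexCategoryᵒᵖ) (b b' : (X.obj Z).obj W) : Prop :=
  ∃ a a' : (X.obj (op ⦋0⦌)).obj W,
    (toDeg X Z.unop).app W a = b ∧ (toDeg X Z.unop).app W a' = b' ∧
      pr (X.obj (op ⦋0⦌)) (m := W.unop) a = pr (X.obj (op ⦋0⦌)) (m := W.unop) a'


lemma rel_inner {Z W W' : SimplexCategoryᵒᵖ} (ψ : W ⟶ W') {b b' : (X.obj Z).obj W}
    (h : rel X Z W b b') : rel X Z W' ((X.obj Z).map ψ b) ((X.obj Z).map ψ b') := by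
  obtain ⟨a, a', rfl, rfl, hp⟩ := h
  refine ⟨(X.obj (op ⦋0⦌)).map ψ a, (X.obj (op ⦋0⦌)).map ψ a',
    (toDeg_naturality X (n := Z.unop) ψ a).symm, (toDeg_naturality X (n := Z.unop) ψ a').symm, ?_⟩
  have e1 := pr_nat (X.obj (op ⦋0⦌)) ψ.unop a
  have e2 := pr_nat (X.obj (op ⦋0⦌)) ψ.unop a'
  rw [show (ψ.unop).op = ψ from rfl] at e1 e2
  rw [e1, e2]
  exact hp

lemma rel_outer {Z Z' W : SimplexCategoryᵒᵖ} (φ : Z ⟶ Z') {b b' : (X.obj Z).obj W}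
    (h : rel X Z W b b') : rel X Z' W ((X.map φ).app W b) ((X.map φ).app W b') := by
  obtain ⟨a, a', rfl, rfl, hp⟩ := h
  have key : toDeg X Z.unop ≫ X.map φ = toDeg X Z'.unop := by
    have := toDeg_comp X (φ.unop)
    rw [show (φ.unop).op = φ from rfl] at this
    exact this
  refine ⟨a, a', ?_, ?_, hp⟩
  · exact (types_congr_hom (congr_app key W) a).symm
  · exact (types_congr_hom (congr_app key W) a').symm

/-- the reduction of a bisimplicial set -/
def redObj : SimplicialObject SSet.{0} where
  obj Z :=
    { obj := fun W => Quot (rel X Z W)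
      map := fun {W W'} ψ => TypeCat.ofHom (Quot.lift (fun b => Quot.mk _ ((X.obj Z).map ψ b))
        (fun b b' h => Quot.sound (rel_inner X ψ h)))
      map_id := by
        intro W
        refine ConcreteCategory.hom_ext _ _ fun q => ?_
        induction q using Quot.ind with
        | _ b => show Quot.mk _ ((X.obj Z).map (𝟙 W) b) = Quot.mk _ b
                 rw [FunctorToTypes.map_id_apply]
      map_comp := by
        intro W W' W'' ψ ψ'
        refine ConcreteCategory.hom_ext _ _ fun q => ?_
        induction q using Quot.ind with
        | _ b => show Quot.mk _ ((X.obj Z).map (ψ ≫ ψ') b) = _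
                 rw [FunctorToTypes.map_comp_apply]
                 rfl }
  map {Z Z'} φ :=
    { app := fun W => TypeCat.ofHom (Quot.lift (fun b => Quot.mk _ ((X.map φ).app W b))
        (fun b b' h => Quot.sound (rel_outer X φ h)))
      naturality := by
        intro W W' ψ
        refine ConcreteCategory.hom_ext _ _ fun q => ?_
        induction q using Quot.ind with
        | _ b =>
          show Quot.mk _ ((X.map φ).app W' ((X.obj Z).map ψ b)) =
            Quot.mk _ ((X.obj Z').map ψ ((X.map φ).app W b))
          rw [FunctorToTypes.naturality] }
  map_id := by
    intro Z
    apply NatTrans.ext; funext W; refine ConcreteCategory.hom_ext _ _ fun q => ?_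
    induction q using Quot.ind with
    | _ b => show Quot.mk _ ((X.map (𝟙 Z)).app W b) = Quot.mk _ b
             rw [X.map_id]
             rfl
  map_comp := by
    intro Z Z' Z'' φ φ'
    apply NatTrans.ext; funext W; refine ConcreteCategory.hom_ext _ _ fun q => ?_
    induction q using Quot.ind with
    | _ b => show Quot.mk _ ((X.map (φ ≫ φ')).app W b) = _
             rw [X.map_comp]
             rfl

/-- the projection to the reduction -/
def proj : X ⟶ redObj X where
  app Z := { app := fun W => TypeCat.ofHom (Quot.mk _) }


lemma rel_map {X X' : SimplicialObject SSet.{0}} (f : X ⟶ X') {Z W : SimplexCategoryᵒᵖ}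
    {b b' : (X.obj Z).obj W} (h : rel X Z W b b') :
    rel X' Z W ((f.app Z).app W b) ((f.app Z).app W b') := by
  obtain ⟨a, a', rfl, rfl, hp⟩ := h
  have key : toDeg X Z.unop ≫ f.app Z = f.app (op ⦋0⦌) ≫ toDeg X' Z.unop := by
    exact f.naturality ((const Z.unop ⦋0⦌ 0).op)
  refine ⟨(f.app (op ⦋0⦌)).app W a, (f.app (op ⦋0⦌)).app W a',
    (types_congr_hom (congr_app key W) a).symm, (types_congr_hom (congr_app key W) a').symm, ?_⟩
  have e1 := pr_map (f.app (op ⦋0⦌)) (m := W.unop) a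
  have e2 := pr_map (f.app (op ⦋0⦌)) (m := W.unop) a'
  rw [← e1, ← e2, hp]

/-- the reduction on morphisms -/
def redMap {X X' : SimplicialObject SSet.{0}} (f : X ⟶ X') : redObj X ⟶ redObj X' where
  app Z :=
    { app := fun W => TypeCat.ofHom (Quot.lift (fun b => Quot.mk _ ((f.app Z).app W b))
        (fun b b' h => Quot.sound (rel_map f h)))
      naturality := by
        intro W W' ψ
        refine ConcreteCategory.hom_ext _ _ fun q => ?_
        induction q using Quot.ind with
        | _ b =>
          show Quot.mk _ ((f.app Z).app W' ((X.obj Z).map ψ b)) =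
            Quot.mk _ ((X'.obj Z).map ψ ((f.app Z).app W b))
          rw [FunctorToTypes.naturality] }
  naturality := by
    intro Z Z' φ
    apply NatTrans.ext; funext W; refine ConcreteCategory.hom_ext _ _ fun q => ?_
    induction q using Quot.ind with
    | _ b =>
      show Quot.mk _ ((f.app Z').app W ((X.map φ).app W b)) =
        Quot.mk _ ((X'.map φ).app W ((f.app Z).app W b))
      exact congr_arg (Quot.mk _) (types_congr_hom (congr_app (f.naturality φ) W) b)


lemma toDeg_zero_app {W : SimplexCategoryᵒᵖ} (a : (X.obj (op ⦋0⦌)).obj W) :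
    (toDeg X ⦋0⦌).app W a = a := types_congr_hom (congr_app (toDeg_zero X) W) a

lemma rel_zero {W : SimplexCategoryᵒᵖ} (a a' : (X.obj (op ⦋0⦌)).obj W)
    (hp : pr (X.obj (op ⦋0⦌)) (m := W.unop) a = pr (X.obj (op ⦋0⦌)) (m := W.unop) a') :
    Quot.mk (rel X (op ⦋0⦌) W) a = Quot.mk (rel X (op ⦋0⦌) W) a' :=
  Quot.sound ⟨a, a', toDeg_zero_app X a, toDeg_zero_app X a', hp⟩

lemma pr_deg (K : SSet.{0}) {W : SimplexCategoryᵒᵖ} (v : K _⦋0⦌) :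
    pr K (m := W.unop) (K.map (const W.unop ⦋0⦌ 0).op v) = Quot.mk _ v := by
  rw [pr_nat]
  exact pr_zero K v

/-- the degree zero part of the reduction is the set of path components -/
def redIso : (redObj X).obj (op ⦋0⦌) ≅
    (Functor.const SimplexCategoryᵒᵖ).obj ((X.obj (op ⦋0⦌)).pi0) :=
  NatIso.ofComponents (fun W => Equiv.toIso
    { toFun := Quot.lift (pr (X.obj (op ⦋0⦌)) (m := W.unop)) (by
        rintro b b' ⟨a, a', rfl, rfl, hp⟩
        rw [toDeg_zero_app, toDeg_zero_app]
        exact hp)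
      invFun := Quot.lift
        (fun v => Quot.mk _ ((X.obj (op ⦋0⦌)).map (const W.unop ⦋0⦌ 0).op v)) (by
        intro v v' hv
        apply rel_zero
        rw [pr_deg, pr_deg]
        exact Quot.sound hv)
      left_inv := by
        intro q
        induction q using Quot.ind with
        | _ b =>
          apply rel_zero
          rw [pr_deg]
          rfl
      right_inv := by
        intro q
        induction q using Quot.ind with
        | _ v => exact pr_deg (X.obj (op ⦋0⦌)) v })
    (by
      intro W W' ψ
      refine ConcreteCategory.hom_ext _ _ fun q => ?_
      induction q using Quot.ind with
      | _ b =>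
        show pr (X.obj (op ⦋0⦌)) ((X.obj (op ⦋0⦌)).map ψ b) = pr (X.obj (op ⦋0⦌)) b
        have := pr_nat (X.obj (op ⦋0⦌)) ψ.unop b
        rw [show (ψ.unop).op = ψ from rfl] at this
        exact this)


lemma discrete_apply_eq {K L : SSet.{0}} (hd : SSet.IsDiscrete K) (g : L ⟶ K)
    {m : SimplexCategory} (a a' : L.obj (op m)) (hp : pr L a = pr L a') :
    g.app (op m) a = g.app (op m) a' := by
  obtain ⟨S, ⟨iso⟩⟩ := hd
  have inj : Function.Injective (iso.hom.app (op m)) := by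
    intro x y h
    have h1 : iso.inv.app (op m) (iso.hom.app (op m) x) = x :=
      types_congr_hom (congr_app iso.hom_inv_id (op m)) x
    have h2 : iso.inv.app (op m) (iso.hom.app (op m) y) = y :=
      types_congr_hom (congr_app iso.hom_inv_id (op m)) y
    rw [← h1, ← h2, h]
  apply inj
  have vtx_eq : ∀ (y : K.obj (op m)), iso.hom.app (op m) y
      = iso.hom.app (op ⦋0⦌) (K.map (const ⦋0⦌ m 0).op y) := by
    intro y
    exact (FunctorToTypes.naturality iso.hom ((const ⦋0⦌ m 0).op) y).symm
  have descOK : ∀ (v v' : K _⦋0⦌), (∃ e : K _⦋1⦌, K.δ 1 e = v ∧ K.δ 0 e = v') →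
      iso.hom.app (op ⦋0⦌) v = iso.hom.app (op ⦋0⦌) v' := by
    rintro v v' ⟨e, rfl, rfl⟩
    have h1 := FunctorToTypes.naturality iso.hom ((SimplexCategory.δ (1 : Fin 2)).op) e
    have h0 := FunctorToTypes.naturality iso.hom ((SimplexCategory.δ (0 : Fin 2)).op) e
    exact h1.trans h0.symm
  let sOf : K.pi0 → S := Quot.lift (fun v => iso.hom.app (op ⦋0⦌) v) descOK
  have key : ∀ y : K.obj (op m), iso.hom.app (op m) y = sOf (pr K y) := fun y => vtx_eq y
  rw [key, key, ← pr_map, ← pr_map, hp]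

/-- descending a map to a Segal precategory through the reduction -/
def descHom {Y : SimplicialObject SSet.{0}} (hY : IsSegalPrecat Y) (f : X ⟶ Y) :
    redObj X ⟶ Y where
  app Z :=
    { app := fun W => TypeCat.ofHom (Quot.lift (fun b => (f.app Z).app W b) (by
        rintro b b' ⟨a, a', rfl, rfl, hp⟩
        have key : toDeg X Z.unop ≫ f.app Z = f.app (op ⦋0⦌) ≫ toDeg Y Z.unop :=
          f.naturality ((const Z.unop ⦋0⦌ 0).op)
        have ka : (f.app Z).app W ((toDeg X Z.unop).app W a) =
            (toDeg Y Z.unop).app W ((f.app (op ⦋0⦌)).app W a) :=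
          types_congr_hom (congr_app key W) a
        have ka' : (f.app Z).app W ((toDeg X Z.unop).app W a') =
            (toDeg Y Z.unop).app W ((f.app (op ⦋0⦌)).app W a') :=
          types_congr_hom (congr_app key W) a'
        rw [ka, ka']
        exact congr_arg ((toDeg Y Z.unop).app W)
          (discrete_apply_eq hY (f.app (op ⦋0⦌)) (m := W.unop) a a' hp)))
      naturality := by
        intro W W' ψ
        refine ConcreteCategory.hom_ext _ _ fun q => ?_
        induction q using Quot.ind with
        | _ b =>
          show (f.app Z).app W' ((X.obj Z).map ψ b) = (Y.obj Z).map ψ ((f.app Z).app W b)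
          rw [FunctorToTypes.naturality] }
  naturality := by
    intro Z Z' φ
    apply NatTrans.ext; funext W; refine ConcreteCategory.hom_ext _ _ fun q => ?_
    induction q using Quot.ind with
    | _ b =>
      show (f.app Z').app W ((X.map φ).app W b) = (Y.map φ).app W ((f.app Z).app W b)
      exact types_congr_hom (congr_app (f.naturality φ) W) b

/-- the reduction functor -/
def redFunctor : SimplicialObject SSet.{0} ⥤ SegalPrecat where
  obj X := ⟨redObj X, (X.obj (op ⦋0⦌)).pi0, ⟨redIso X⟩⟩
  map f := ObjectProperty.homMk (redMap f)
  map_id := by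
    intro X
    apply ObjectProperty.hom_ext
    apply NatTrans.ext; funext Z
    apply NatTrans.ext; funext W; refine ConcreteCategory.hom_ext _ _ fun q => ?_
    induction q using Quot.ind with
    | _ b => rfl
  map_comp := by
    intro X Y Z f g
    apply ObjectProperty.hom_ext
    apply NatTrans.ext; funext Z
    apply NatTrans.ext; funext W; refine ConcreteCategory.hom_ext _ _ fun q => ?_
    induction q using Quot.ind with
    | _ b => rfl

/-- the adjunction -/
def redAdj : redFunctor ⊣ ObjectProperty.ι IsSegalPrecat :=
  Adjunction.mkOfHomEquiv
    { homEquiv := fun X Y =>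
        { toFun := fun k => proj X ≫ k.hom
          invFun := fun f => ObjectProperty.homMk (descHom X Y.2 f)
          left_inv := by
            intro k
            apply ObjectProperty.hom_ext
            apply NatTrans.ext; funext Z
            apply NatTrans.ext; funext W; refine ConcreteCategory.hom_ext _ _ fun q => ?_
            induction q using Quot.ind with
            | _ b => rfl
          right_inv := by
            intro f
            apply NatTrans.ext; funext Z
            apply NatTrans.ext; funext W; refine ConcreteCategory.hom_ext _ _ fun a => ?_
            rfl }
      homEquiv_naturality_left_symm := by
        intro X X' Y f g
        apply ObjectProperty.hom_ext
        apply NatTrans.ext; funext Z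
        apply NatTrans.ext; funext W; refine ConcreteCategory.hom_ext _ _ fun q => ?_
        induction q using Quot.ind with
        | _ b => rfl
      homEquiv_naturality_right := by
        intro X Y Y' f g
        rfl }


end SegalAux

/-- The inclusion of the full subcategory of Segal precategories into bisimplicial sets has
a left adjoint (the reduction functor), which collapses the degree-zero simplicial set to
its set of path components. -/
theorem segalPrecat_inclusion_has_left_adjoint :
    ∃ (L : SimplicialObject SSet.{0} ⥤ SegalPrecat)
      (_ : L ⊣ ObjectProperty.ι IsSegalPrecat),
      ∀ X : SimplicialObject SSet.{0},
        Nonempty ((L.obj X).obj.obj (op ⦋0⦌) ≅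
          (Functor.const SimplexCategoryᵒᵖ).obj (SSet.pi0 (X.obj (op ⦋0⦌)))) := by
  exact ⟨SegalAux.redFunctor, SegalAux.redAdj, fun X => ⟨SegalAux.redIso X⟩⟩
end

section
/- For a Segal precategory X (bisimplicial set with X_0 discrete) and p ≥ 0, let X_p(v_0,...,v_p) denote the fiber of X_p → (cosk_0 X)_p = X_0^{p+1} over (v_0,...,v_p). For any simplicial set A regarded as a constant bisimplicial set, and A_{[p]} the pushout of Δ[p]_0 ← A × Δ[p]_0 → A × Δ[p], there is a natural bijection Hom(A_{[p]}, X) ≅ ∐_{(v_0,...,v_p)} Hom(A, X_p(v_0,...,v_p)). -/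
open CategoryTheory Simplicial Opposite Limits

/-- Bisimplicial sets: functors `Δᵒᵖ → SSet`. -/
abbrev BiSSet := SimplicialObject SSet.{0}

/-- The discrete (constant) simplicial set on a set `S`. -/
def cst (S : Type) : SSet.{0} := (Functor.const SimplexCategoryᵒᵖ).obj S

/-- A simplicial set regarded as a constant bisimplicial set. -/
def cstB (A : SSet.{0}) : BiSSet := (Functor.const SimplexCategoryᵒᵖ).obj A

/-- A simplicial set regarded as a bisimplicial set which is constant in the *other*
simplicial direction: in degree `k` it is the discrete simplicial set on the set of
`k`-simplices. -/
def transposeB (B : SSet.{0}) : BiSSet :=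
  B ⋙ Functor.const SimplexCategoryᵒᵖ

/-- The discrete degree-zero part `Δ[p]₀` of `Δ[p]`: the set of its `p+1` vertices,
regarded as a (doubly) constant bisimplicial set. -/
def vertObj (p : ℕ) : BiSSet := cstB (cst (Fin (p + 1)))

/-- The inclusion `Δ[p]₀ → Δ[p]` of the vertices, with `Δ[p]` regarded as a bisimplicial
set constant in the other direction. -/
def vertIncl (p : ℕ) : vertObj p ⟶ transposeB Δ[p] where
  app n :=
    { app := fun _ => TypeCat.ofHom (fun v => SSet.stdSimplex.const p v n)
      naturality := fun _ _ _ => rfl }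
  naturality n n' φ := by
    apply NatTrans.ext
    funext i
    rfl

/-- The object `A_{⦋p⦌}`: the pushout of `Δ[p]₀ ← A × Δ[p]₀ → A × Δ[p]` in bisimplicial
sets (where `A` is a simplicial set regarded as a constant bisimplicial set). -/
noncomputable def APush (A : SSet.{0}) (p : ℕ) : BiSSet :=
  pushout (prod.snd : Limits.prod (cstB A) (vertObj p) ⟶ vertObj p)
    (prod.map (𝟙 (cstB A)) (vertIncl p))

variable (X : BiSSet) {V : Type} (e : X.obj (op ⦋0⦌) ≅ cst V) (p : ℕ)

/-- The fiber `X_p(v_0, …, v_p)` of `X_p → (cosk₀ X)_p = X_0^{p+1}` over a tuple of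
vertices `(v_0, …, v_p)`, for a Segal precategory `X` whose degree-zero object is the
discrete object on `V`. -/
def fiberAt (v : Fin (p + 1) → V) : SSet.{0} where
  obj n := { t : (X.obj (op ⦋p⦌)).obj n //
    ∀ i : Fin (p + 1),
      e.hom.app n ((X.map (SimplexCategory.const ⦋0⦌ ⦋p⦌ i).op).app n t) = v i }
  map {n n'} φ := TypeCat.ofHom (fun t => ⟨(X.obj (op ⦋p⦌)).map φ t.1, by
    intro i
    have h1 := NatTrans.naturality_apply (X.map (SimplexCategory.const ⦋0⦌ ⦋p⦌ i).op) φ t.1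
    have h2 := NatTrans.naturality_apply e.hom φ
      ((X.map (SimplexCategory.const ⦋0⦌ ⦋p⦌ i).op).app n t.1)
    have h3 := t.2 i
    rw [h1, h2]
    exact h3⟩)
  map_id n := by
    ext t
    exact (X.obj (op ⦋p⦌)).map_id_apply n t.1
  map_comp φ ψ := by
    ext t
    exact (X.obj (op ⦋p⦌)).map_comp_apply φ ψ t.1
section APushAux

open SSet

/-- A morphism of bisimplicial sets is determined by its doubly-levelwise components. -/
lemma biext {Y Z : BiSSet} {u w : Y ⟶ Z}
    (h : ∀ n m x, (u.app n).app m x = (w.app n).app m x) : u = w :=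
  NatTrans.ext (funext fun n => NatTrans.ext (funext fun m => ConcreteCategory.hom_ext _ _ (h n m)))

/-- Maps out of a pushout correspond to compatible pairs. -/
noncomputable def pushoutHomEquiv {C : Type*} [Category C] {A B D X : C}
    (f : A ⟶ B) (g : A ⟶ D) [Limits.HasPushout f g] :
    (Limits.pushout f g ⟶ X) ≃ {q : (B ⟶ X) × (D ⟶ X) // f ≫ q.1 = g ≫ q.2} where
  toFun F := ⟨(pushout.inl f g ≫ F, pushout.inr f g ≫ F), by
    rw [← Category.assoc, ← Category.assoc, pushout.condition]⟩
  invFun q := pushout.desc q.1.1 q.1.2 q.2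
  left_inv F := by
    apply pushout.hom_ext
    · exact pushout.inl_desc _ _ _
    · exact pushout.inr_desc _ _ _
  right_inv q := by
    apply Subtype.ext
    apply Prod.ext
    · exact pushout.inl_desc _ _ _
    · exact pushout.inr_desc _ _ _

/-- Explicit simplicial set `A × (discrete Fin (p+1))`. -/
def AQ (A : SSet.{0}) (p : ℕ) : SSet.{0} where
  obj m := A.obj m × Fin (p + 1)
  map φ := TypeCat.ofHom (fun x => (A.map φ x.1, x.2))
  map_id m := by ext x <;> simp
  map_comp φ ψ := by ext x <;> simp

/-- Explicit product of `cstB A` and `vertObj p`. -/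
def Qexp (A : SSet.{0}) (p : ℕ) : BiSSet := cstB (AQ A p)

def qfst (A : SSet.{0}) (p : ℕ) : Qexp A p ⟶ cstB A where
  app n := { app := fun m => TypeCat.ofHom (fun x => x.1)
             naturality := fun m m' φ => rfl }
  naturality n n' ψ := rfl

def qsnd (A : SSet.{0}) (p : ℕ) : Qexp A p ⟶ vertObj p where
  app n := { app := fun m => TypeCat.ofHom (fun x => x.2)
             naturality := fun m m' φ => rfl }
  naturality n n' ψ := rfl

/-- Explicit product of `cstB A` and `transposeB Δ[p]`. -/
def Pexp (A : SSet.{0}) (p : ℕ) : BiSSet where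
  obj n :=
    { obj := fun m => A.obj m × Δ[p].obj n
      map := fun φ => TypeCat.ofHom (fun x => (A.map φ x.1, x.2))
      map_id := fun m => by ext x <;> simp
      map_comp := fun φ ψ => by ext x <;> simp }
  map {n n'} ψ :=
    { app := fun m => TypeCat.ofHom (fun x => (x.1, Δ[p].map ψ x.2))
      naturality := fun m m' φ => rfl }
  map_id n := by
    apply NatTrans.ext; funext m; refine ConcreteCategory.hom_ext _ _ fun x => ?_
    exact Prod.ext rfl (types_congr_hom (Δ[p].map_id n) x.2)
  map_comp φ ψ := by
    apply NatTrans.ext; funext m; refine ConcreteCategory.hom_ext _ _ fun x => ?_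
    exact Prod.ext rfl (types_congr_hom (Δ[p].map_comp φ ψ) x.2)

def pfst (A : SSet.{0}) (p : ℕ) : Pexp A p ⟶ cstB A where
  app n := { app := fun m => TypeCat.ofHom (fun x => x.1)
             naturality := fun m m' φ => rfl }
  naturality n n' ψ := rfl

def psnd (A : SSet.{0}) (p : ℕ) : Pexp A p ⟶ transposeB Δ[p] where
  app n := { app := fun m => TypeCat.ofHom (fun x => x.2)
             naturality := fun m m' φ => rfl }
  naturality n n' ψ := by
    apply NatTrans.ext; funext m; refine ConcreteCategory.hom_ext _ _ fun x => ?_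
    rfl

/-- `Qexp` is a binary product of `cstB A` and `vertObj p`. -/
def qIsLimit (A : SSet.{0}) (p : ℕ) :
    IsLimit (BinaryFan.mk (qfst A p) (qsnd A p)) :=
  BinaryFan.isLimitMk
    (fun s =>
      { app := fun n =>
          { app := fun m => TypeCat.ofHom (fun w => ((s.fst.app n).app m w, (s.snd.app n).app m w))
            naturality := fun m m' φ => by
              refine ConcreteCategory.hom_ext _ _ fun w => ?_
              exact Prod.ext (types_congr_hom ((s.fst.app n).naturality φ) w)
                (types_congr_hom ((s.snd.app n).naturality φ) w) }
        naturality := fun n n' ψ => by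
          apply NatTrans.ext; funext m; refine ConcreteCategory.hom_ext _ _ fun w => ?_
          exact Prod.ext
            (types_congr_hom (congrArg (fun t => NatTrans.app t m) (s.fst.naturality ψ)) w)
            (types_congr_hom (congrArg (fun t => NatTrans.app t m) (s.snd.naturality ψ)) w) })
    (fun s => rfl) (fun s => rfl)
    (fun s u h1 h2 => by
      apply biext
      intro n m x
      exact Prod.ext
        (types_congr_hom (congrArg (fun t => NatTrans.app (NatTrans.app t n) m) h1) x)
        (types_congr_hom (congrArg (fun t => NatTrans.app (NatTrans.app t n) m) h2) x))

/-- `Pexp` is a binary product of `cstB A` and `transposeB Δ[p]`. -/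
def pIsLimit (A : SSet.{0}) (p : ℕ) :
    IsLimit (BinaryFan.mk (pfst A p) (psnd A p)) :=
  BinaryFan.isLimitMk
    (fun s =>
      { app := fun n =>
          { app := fun m => TypeCat.ofHom (fun w => ((s.fst.app n).app m w, (s.snd.app n).app m w))
            naturality := fun m m' φ => by
              refine ConcreteCategory.hom_ext _ _ fun w => ?_
              exact Prod.ext (types_congr_hom ((s.fst.app n).naturality φ) w)
                (types_congr_hom ((s.snd.app n).naturality φ) w) }
        naturality := fun n n' ψ => by
          apply NatTrans.ext; funext m; refine ConcreteCategory.hom_ext _ _ fun w => ?_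
          exact Prod.ext
            (types_congr_hom (congrArg (fun t => NatTrans.app t m) (s.fst.naturality ψ)) w)
            (types_congr_hom (congrArg (fun t => NatTrans.app t m) (s.snd.naturality ψ)) w) })
    (fun s => rfl) (fun s => rfl)
    (fun s u h1 h2 => by
      apply biext
      intro n m x
      exact Prod.ext
        (types_congr_hom (congrArg (fun t => NatTrans.app (NatTrans.app t n) m) h1) x)
        (types_congr_hom (congrArg (fun t => NatTrans.app (NatTrans.app t n) m) h2) x))

noncomputable def qIso (A : SSet.{0}) (p : ℕ) :
    Qexp A p ≅ Limits.prod (cstB A) (vertObj p) :=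
  (qIsLimit A p).conePointUniqueUpToIso (limit.isLimit _)

noncomputable def pIso (A : SSet.{0}) (p : ℕ) :
    Pexp A p ≅ Limits.prod (cstB A) (transposeB Δ[p]) :=
  (pIsLimit A p).conePointUniqueUpToIso (limit.isLimit _)

lemma qIso_hom_fst (A : SSet.{0}) (p : ℕ) :
    (qIso A p).hom ≫ Limits.prod.fst = qfst A p :=
  IsLimit.conePointUniqueUpToIso_hom_comp _ _ (Discrete.mk WalkingPair.left)

lemma qIso_hom_snd (A : SSet.{0}) (p : ℕ) :
    (qIso A p).hom ≫ Limits.prod.snd = qsnd A p :=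
  IsLimit.conePointUniqueUpToIso_hom_comp _ _ (Discrete.mk WalkingPair.right)

lemma pIso_hom_fst (A : SSet.{0}) (p : ℕ) :
    (pIso A p).hom ≫ Limits.prod.fst = pfst A p :=
  IsLimit.conePointUniqueUpToIso_hom_comp _ _ (Discrete.mk WalkingPair.left)

lemma pIso_hom_snd (A : SSet.{0}) (p : ℕ) :
    (pIso A p).hom ≫ Limits.prod.snd = psnd A p :=
  IsLimit.conePointUniqueUpToIso_hom_comp _ _ (Discrete.mk WalkingPair.right)

def sid (p : ℕ) : (SSet.stdSimplex.{0}.obj ⦋p⦌).obj (op ⦋p⦌) :=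
  stdSimplex.objEquiv.symm (𝟙 _)

lemma objEquiv_sid (p : ℕ) : stdSimplex.objEquiv (sid p) = 𝟙 ⦋p⦌ :=
  Equiv.apply_symm_apply _ _

/-- The explicit version of `prod.map (𝟙 (cstB A)) (vertIncl p)`. -/
def mapE (A : SSet.{0}) (p : ℕ) : Qexp A p ⟶ Pexp A p where
  app n := { app := fun m => TypeCat.ofHom (fun x => (x.1, SSet.stdSimplex.const p x.2 n))
             naturality := fun m m' φ => rfl }
  naturality n n' ψ := by
    apply NatTrans.ext; funext m; refine ConcreteCategory.hom_ext _ _ fun x => ?_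
    rfl

end APushAux
section APushAux2

open SSet

lemma gA (g : vertObj p ⟶ X) (m : SimplexCategoryᵒᵖ) (i : Fin (p + 1)) :
    e.hom.app m ((g.app (op ⦋0⦌)).app m i) =
      e.hom.app (op ⦋0⦌) ((g.app (op ⦋0⦌)).app (op ⦋0⦌) i) :=
  types_congr_hom ((g.app (op ⦋0⦌) ≫ e.hom).naturality
    (SimplexCategory.const m.unop ⦋0⦌ 0).op) i

lemma gB (g : vertObj p ⟶ X) (n m : SimplexCategoryᵒᵖ) (i : Fin (p + 1)) :
    (g.app n).app m i =
      (X.map (SimplexCategory.const n.unop ⦋0⦌ 0).op).app m ((g.app (op ⦋0⦌)).app m i) :=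
  types_congr_hom (congrArg (fun t => NatTrans.app t m)
    (g.naturality (SimplexCategory.const n.unop ⦋0⦌ 0).op)) i

lemma ehom_inj (m : SimplexCategoryᵒᵖ) : Function.Injective (e.hom.app m) := by
  intro x y hxy
  have hx := types_congr_hom (congrArg (fun t => NatTrans.app t m) e.hom_inv_id) x
  have hy := types_congr_hom (congrArg (fun t => NatTrans.app t m) e.hom_inv_id) y
  calc x = e.inv.app m (e.hom.app m x) := hx.symm
    _ = e.inv.app m (e.hom.app m y) := congrArg _ hxy
    _ = y := hy

/-- Maps `vertObj p ⟶ X` are the same as vertex tuples. -/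
def vertHomEquiv : (vertObj p ⟶ X) ≃ (Fin (p + 1) → V) where
  toFun g i := e.hom.app (op ⦋0⦌) ((g.app (op ⦋0⦌)).app (op ⦋0⦌) i)
  invFun v :=
    { app := fun n =>
        { app := fun m => TypeCat.ofHom (fun i =>
            (X.map (SimplexCategory.const n.unop ⦋0⦌ 0).op).app m (e.inv.app m (v i)))
          naturality := fun m m' φ => by
            refine ConcreteCategory.hom_ext _ _ fun i => ?_
            have h1 := types_congr_hom
              ((X.map (SimplexCategory.const n.unop ⦋0⦌ 0).op).naturality φ)
              (e.inv.app m (v i))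
            have h2 := types_congr_hom (e.inv.naturality φ) (v i)
            simp only [types_comp_apply] at h1 h2
            show (X.map (SimplexCategory.const n.unop ⦋0⦌ 0).op).app m'
                (e.inv.app m' (v i)) =
              (X.obj n).map φ
                ((X.map (SimplexCategory.const n.unop ⦋0⦌ 0).op).app m (e.inv.app m (v i)))
            rw [← h1]
            exact congrArg (fun y => (X.map (SimplexCategory.const n.unop ⦋0⦌ 0).op).app m' y) h2 }
      naturality := fun n n' ψ => by
        apply NatTrans.ext; funext m; refine ConcreteCategory.hom_ext _ _ fun i => ?_
        have hcomp : (SimplexCategory.const n.unop ⦋0⦌ 0).op ≫ ψ =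
            (SimplexCategory.const n'.unop ⦋0⦌ 0).op := by
          conv_lhs => rw [← ψ.op_unop, ← op_comp]
          rw [← SimplexCategory.eq_const_to_zero (ψ.unop ≫ SimplexCategory.const n.unop ⦋0⦌ 0)]
        show (X.map (SimplexCategory.const n'.unop ⦋0⦌ 0).op).app m (e.inv.app m (v i)) =
          (X.map ψ).app m
            ((X.map (SimplexCategory.const n.unop ⦋0⦌ 0).op).app m (e.inv.app m (v i)))
        rw [← hcomp, X.map_comp]
        rfl }
  left_inv g := by
    apply biext
    intro n m i
    have hA := gA X e p g m i
    have hinv : e.inv.app m (e.hom.app (op ⦋0⦌) ((g.app (op ⦋0⦌)).app (op ⦋0⦌) i)) =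
        (g.app (op ⦋0⦌)).app m i := by
      rw [← hA]
      exact types_congr_hom (congrArg (fun t => NatTrans.app t m) e.hom_inv_id)
        ((g.app (op ⦋0⦌)).app m i)
    show (X.map (SimplexCategory.const n.unop ⦋0⦌ 0).op).app m
        (e.inv.app m (e.hom.app (op ⦋0⦌) ((g.app (op ⦋0⦌)).app (op ⦋0⦌) i))) =
      (g.app n).app m i
    rw [hinv]
    exact (gB X p g n m i).symm
  right_inv v := by
    funext i
    show e.hom.app (op ⦋0⦌)
        ((X.map (SimplexCategory.const ⦋0⦌ ⦋0⦌ 0).op).app (op ⦋0⦌)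
          (e.inv.app (op ⦋0⦌) (v i))) = v i
    have hid : (SimplexCategory.const ⦋0⦌ ⦋0⦌ 0).op = 𝟙 (op (SimplexCategory.mk 0)) := by
      rw [SimplexCategory.const_eq_id]
      rfl
    rw [hid, X.map_id]
    exact types_congr_hom (congrArg (fun (t : cst V ⟶ cst V) => t.app (op (SimplexCategory.mk 0))) e.inv_hom_id) (v i)

/-- Maps `Pexp A p ⟶ X` are the same as maps `A ⟶ X_p`. -/
def equivA (A : SSet.{0}) : (Pexp A p ⟶ X) ≃ (A ⟶ X.obj (op ⦋p⦌)) where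
  toFun h :=
    { app := fun m => TypeCat.ofHom (fun a => (h.app (op ⦋p⦌)).app m (a, sid p))
      naturality := fun m m' φ => by
        refine ConcreteCategory.hom_ext _ _ fun a => ?_
        exact types_congr_hom ((h.app (op ⦋p⦌)).naturality φ) (a, sid p) }
  invFun f :=
    { app := fun n =>
        { app := fun m => TypeCat.ofHom (fun x =>
            (X.map (stdSimplex.objEquiv x.2).op).app m (f.app m x.1))
          naturality := fun m m' φ => by
            refine ConcreteCategory.hom_ext _ _ fun x => ?_
            have h1 := types_congr_hom
              ((X.map (stdSimplex.objEquiv x.2).op).naturality φ) (f.app m x.1)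
            have h2 := types_congr_hom (f.naturality φ) x.1
            simp only [types_comp_apply] at h1 h2
            show (X.map (stdSimplex.objEquiv x.2).op).app m'
                (f.app m' (A.map φ x.1)) = (X.obj n).map φ
                  ((X.map (stdSimplex.objEquiv x.2).op).app m (f.app m x.1))
            rw [h2, ← h1] }
      naturality := fun n n' ψ => by
        apply NatTrans.ext; funext m; refine ConcreteCategory.hom_ext _ _ fun x => ?_
        have hσ : stdSimplex.objEquiv (Δ[p].map ψ x.2) =
            ψ.unop ≫ stdSimplex.objEquiv x.2 := by
          rw [stdSimplex.map_apply]
          exact Equiv.apply_symm_apply _ _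
        show (X.map (stdSimplex.objEquiv (Δ[p].map ψ x.2)).op).app m
            (f.app m x.1) =
          (X.map ψ).app m
            ((X.map (stdSimplex.objEquiv x.2).op).app m (f.app m x.1))
        rw [hσ, op_comp, Quiver.Hom.op_unop, X.map_comp]
        rfl }
  left_inv h := by
    apply biext
    intro n m x
    have h2 : Δ[p].map (stdSimplex.objEquiv x.2).op (sid p) =
        x.2 := by
      rw [stdSimplex.map_apply, Quiver.Hom.unop_op, objEquiv_sid,
        Category.comp_id]
      exact Equiv.symm_apply_apply _ _
    have h3 := types_congr_hom (congrArg (fun t => NatTrans.app t m)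
      (h.naturality (stdSimplex.objEquiv x.2).op)) (x.1, sid p)
    show (X.map (stdSimplex.objEquiv x.2).op).app m
        ((h.app (op ⦋p⦌)).app m (x.1, sid p)) = (h.app n).app m x
    exact h3.symm.trans (congrArg (fun y => (h.app n).app m y) (Prod.ext rfl h2))
  right_inv f := by
    apply NatTrans.ext; funext m; refine ConcreteCategory.hom_ext _ _ fun a => ?_
    show (X.map (stdSimplex.objEquiv (sid p)).op).app m
        (f.app m a) = f.app m a
    rw [objEquiv_sid,
      show (𝟙 (⦋p⦌ : SimplexCategory)).op = 𝟙 (op (⦋p⦌ : SimplexCategory)) from rfl, X.map_id]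
    rfl

lemma qfst_eq (A : SSet.{0}) : mapE A p ≫ pfst A p = qfst A p := rfl

lemma qsnd_vertIncl (A : SSet.{0}) :
    qsnd A p ≫ vertIncl p = mapE A p ≫ psnd A p := rfl

lemma qIso_mapComm (A : SSet.{0}) :
    (qIso A p).hom ≫ Limits.prod.map (𝟙 (cstB A)) (vertIncl p) =
      mapE A p ≫ (pIso A p).hom := by
  apply Limits.prod.hom_ext
  · rw [Category.assoc, Limits.prod.map_fst, Category.comp_id, qIso_hom_fst,
      Category.assoc, pIso_hom_fst, qfst_eq]
  · rw [Category.assoc, Limits.prod.map_snd, Category.assoc, pIso_hom_snd,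
      ← qsnd_vertIncl, ← Category.assoc, qIso_hom_snd]

end APushAux2
section APushAux3

open SSet

/-- Maps out of the chosen product correspond to maps `A ⟶ X_p`. -/
noncomputable def prodHomEquiv (A : SSet.{0}) :
    (Limits.prod (cstB A) (transposeB Δ[p]) ⟶ X) ≃ (A ⟶ X.obj (op ⦋p⦌)) where
  toFun h := equivA X p A ((pIso A p).hom ≫ h)
  invFun f := (pIso A p).inv ≫ (equivA X p A).symm f
  left_inv h := by
    dsimp only
    rw [Equiv.symm_apply_apply, Iso.inv_hom_id_assoc]
  right_inv f := by
    dsimp only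
    rw [Iso.hom_inv_id_assoc, Equiv.apply_symm_apply]

lemma cond_iff (A : SSet.{0}) (g : vertObj p ⟶ X)
    (h : Limits.prod (cstB A) (transposeB Δ[p]) ⟶ X) :
    (Limits.prod.snd ≫ g = Limits.prod.map (𝟙 (cstB A)) (vertIncl p) ≫ h) ↔
      (∀ (m : SimplexCategoryᵒᵖ) (a : A.obj m) (i : Fin (p + 1)),
        e.hom.app m ((X.map (SimplexCategory.const ⦋0⦌ ⦋p⦌ i).op).app m
          ((prodHomEquiv X p A h).app m a)) = vertHomEquiv X e p g i) := by
  set h' : Pexp A p ⟶ X := (pIso A p).hom ≫ h with hh'def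
  set f : A ⟶ X.obj (op ⦋p⦌) := equivA X p A h' with hfdef
  have hh' : h' = (equivA X p A).symm f := (Equiv.symm_apply_apply _ _).symm
  have hcomp : ∀ (n m : SimplexCategoryᵒᵖ) (x : ((Pexp A p).obj n).obj m),
      (h'.app n).app m x =
        (X.map (stdSimplex.objEquiv x.2).op).app m (f.app m x.1) := by
    intro n m x
    exact types_congr_hom (congrArg (fun t => NatTrans.app (NatTrans.app t n) m) hh') x
  have step1 : (Limits.prod.snd ≫ g = Limits.prod.map (𝟙 (cstB A)) (vertIncl p) ≫ h) ↔
      (qsnd A p ≫ g = mapE A p ≫ h') := by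
    rw [← cancel_epi (qIso A p).hom, ← Category.assoc, qIso_hom_snd,
      ← Category.assoc, qIso_mapComm, Category.assoc, hh'def]
  rw [step1]
  constructor
  · intro hEq m a i
    have E := types_congr_hom (congrArg
      (fun t => NatTrans.app (NatTrans.app t (op (SimplexCategory.mk 0))) m) hEq)
      ((a, i) : ((Qexp A p).obj (op (SimplexCategory.mk 0))).obj m)
    -- E : (g.app (op ⦋0⦌)).app m i = (h'.app (op ⦋0⦌)).app m (a, const p i (op ⦋0⦌))
    have E' : (g.app (op ⦋0⦌)).app m i =
        (X.map (SimplexCategory.const ⦋0⦌ ⦋p⦌ i).op).app m (f.app m a) := by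
      refine E.trans ?_
      exact hcomp (op (SimplexCategory.mk 0)) m (a, stdSimplex.const p i _)
    exact (congrArg (e.hom.app m) E'.symm).trans (gA X e p g m i)
  · intro C
    apply biext
    intro n m x
    have hC := C m x.1 x.2
    have ht : (X.map (SimplexCategory.const ⦋0⦌ ⦋p⦌ x.2).op).app m (f.app m x.1) =
        (g.app (op ⦋0⦌)).app m x.2 :=
      ehom_inj X e m (hC.trans (gA X e p g m x.2).symm)
    have hfac : (X.map (SimplexCategory.const n.unop ⦋p⦌ x.2).op).app m (f.app m x.1) =
        (X.map (SimplexCategory.const n.unop ⦋0⦌ 0).op).app m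
          ((X.map (SimplexCategory.const ⦋0⦌ ⦋p⦌ x.2).op).app m (f.app m x.1)) := by
      rw [SimplexCategory.const_fac_thru_zero, op_comp, X.map_comp]
      rfl
    show (g.app n).app m x.2 = (h'.app n).app m (x.1, stdSimplex.const p x.2 n)
    rw [hcomp n m (x.1, stdSimplex.const p x.2 n)]
    refine Eq.trans ?_ hfac.symm
    rw [ht]
    exact gB X p g n m x.2

/-- Repackaging pairs satisfying the fiber condition as maps into the fiber. -/
def fiberEquiv (A : SSet.{0}) :
    {w : (Fin (p + 1) → V) × (A ⟶ X.obj (op ⦋p⦌)) //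
      ∀ (m : SimplexCategoryᵒᵖ) (a : A.obj m) (i : Fin (p + 1)),
        e.hom.app m ((X.map (SimplexCategory.const ⦋0⦌ ⦋p⦌ i).op).app m
          (w.2.app m a)) = w.1 i} ≃
    (Σ v : Fin (p + 1) → V, (A ⟶ fiberAt X e p v)) where
  toFun w := ⟨w.1.1,
    { app := fun m => TypeCat.ofHom (fun a => ⟨w.1.2.app m a, fun i => w.2 m a i⟩)
      naturality := fun m m' φ => by
        refine ConcreteCategory.hom_ext _ _ fun a => ?_
        exact Subtype.ext (types_congr_hom (w.1.2.naturality φ) a) }⟩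
  invFun s := ⟨(s.1,
    { app := fun m => TypeCat.ofHom (fun a => (s.2.app m a).1)
      naturality := fun m m' φ => by
        refine ConcreteCategory.hom_ext _ _ fun a => ?_
        exact congrArg Subtype.val (types_congr_hom (s.2.naturality φ) a) }),
    fun m a i => (s.2.app m a).2 i⟩
  left_inv w := by
    apply Subtype.ext
    apply Prod.ext
    · rfl
    · apply NatTrans.ext; funext m; rfl
  right_inv s := by
    refine Sigma.ext rfl (heq_of_eq ?_)
    apply NatTrans.ext; funext m; refine ConcreteCategory.hom_ext _ _ fun a => ?_
    exact Subtype.ext rfl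

end APushAux3

/-- For a Segal precategory `X` (with degree-zero object the discrete object on `V`),
maps `A_{⦋p⦌} → X` out of the pushout `A_{⦋p⦌} = (Δ[p]₀) ⊔_{A × Δ[p]₀} (A × Δ[p])`
correspond naturally to pairs of a tuple of vertices `(v_0, …, v_p)` and a map
`A → X_p(v_0, …, v_p)` into the corresponding fiber:
`Hom(A_{⦋p⦌}, X) ≅ ∐_{(v_0, …, v_p)} Hom(A, X_p(v_0, …, v_p))`. -/
theorem aPush_hom_decomposition (A : SSet.{0}) :
    Nonempty ((APush A p ⟶ X) ≃
      (Σ v : Fin (p + 1) → V, (A ⟶ fiberAt X e p v))) := by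
  exact ⟨((pushoutHomEquiv _ _).trans
    (Equiv.subtypeEquiv
      (Equiv.prodCongr (vertHomEquiv X e p) (prodHomEquiv X p A))
      (fun gh => cond_iff X e p A gh.1 gh.2))).trans
    (fiberEquiv X e p A)⟩
end

section
/- A simplex σ of a simplicial set X (in any degree m) is nondegenerate if and only if no two of its degeneracies are equal, i.e., s_i σ ≠ s_j σ for all i < j. -/
open CategoryTheory Simplicial

/-- A simplex `σ ∈ X_m` is degenerate if it is of the form `s_i τ` for some degeneracy
operator `s_i` and some simplex `τ` of dimension one lower. -/
def SSet.IsDegenerateSimplex (X : SSet.{0}) : ∀ {m : ℕ}, X _⦋m⦌ → Prop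
| 0, _ => False
| (k + 1), σ => ∃ (i : Fin (k + 1)) (τ : X _⦋k⦌), X.σ i τ = σ

/-- A simplex `σ` of a simplicial set `X` (in any degree `m`) is nondegenerate if and only
if no two of its degeneracies are equal, i.e. `s_i σ ≠ s_j σ` for all `i < j`. -/
theorem nondegenerate_iff_degeneracies_distinct (X : SSet.{0}) (m : ℕ) (σ : X _⦋m⦌) :
    ¬ X.IsDegenerateSimplex σ ↔
      ∀ i j : Fin (m + 1), i < j → X.σ i σ ≠ X.σ j σ := by
  match m with
  | 0 =>
    constructor
    · intro _ i j hij
      exact absurd hij (by omega)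
    · intro _ h
      exact h
  | k + 1 =>
    constructor
    · intro hnd i j hij heq
      apply hnd
      have hj : j ≠ 0 := fun h => by subst h; simp at hij
      set j' := j.pred hj with hj'
      have hjs : j = j'.succ := (Fin.succ_pred j hj).symm
      have H : i ≤ Fin.castSucc j' := by
        rw [Fin.le_def]
        rw [Fin.lt_def, hjs] at hij
        simp only [Fin.val_succ] at hij
        simpa using Nat.lt_succ_iff.mp hij
      refine ⟨j', X.δ i σ, ?_⟩
      have h1 := ConcreteCategory.congr_hom (X.δ_comp_σ_of_le H) σ
      simp only [types_comp_apply] at h1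
      have h2 := ConcreteCategory.congr_hom (X.δ_comp_σ_self (i := i)) σ
      simp only [types_comp_apply, types_id_apply] at h2
      rw [← h1, ← hjs, ← heq, h2]
    · rintro h ⟨i, τ, rfl⟩
      apply h (Fin.castSucc i) i.succ (Fin.castSucc_lt_succ (i := i))
      have := ConcreteCategory.congr_hom (X.σ_comp_σ (le_refl i)) τ
      simpa only [types_comp_apply] using this
end

section
/- Let X and Y be bisimplicial sets with f : X → Y a monomorphism in each degree. Then for each m, the intersection of X_m and L_m Y inside Y_m is exactly L_m X, and consequently the relative latching map X_m ⊔_{L_m X} L_m Y → Y_m is a monomorphism. -/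
open CategoryTheory Simplicial Opposite Limits

/-- The indexing category for the `m`-th latching object: surjections `⦋m⦌ ↠ ⦋k⦌` with
`k < m`; a morphism `(k, σ) → (k', σ')` is `τ : [k'] → ⦋k⦌` with `σ' ≫ τ = σ`
(so that the diagram below is covariant via `X.map τ.op`). -/
structure LatchIx (m : ℕ) where
  /-- the target dimension -/
  k : ℕ
  hk : k < m
  /-- the surjection `⦋m⦌ ↠ ⦋k⦌` -/
  σ : (⦋m⦌ : SimplexCategory) ⟶ ⦋k⦌
  surj : Function.Surjective σ.toOrderHom

instance (m : ℕ) : Category (LatchIx m) where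
  Hom a b := { τ : (⦋b.k⦌ : SimplexCategory) ⟶ ⦋a.k⦌ // b.σ ≫ τ = a.σ }
  id a := ⟨𝟙 _, Category.comp_id _⟩
  comp {a b c} f g := ⟨g.1 ≫ f.1, by rw [← Category.assoc, g.2, f.2]⟩
  id_comp f := Subtype.ext (Category.comp_id _)
  comp_id f := Subtype.ext (Category.id_comp _)
  assoc f g h := Subtype.ext (Category.assoc h.1 g.1 f.1).symm

/-- The latching diagram of a bisimplicial set `X` at `⦋m⦌`. -/
def latchDiagram (X : BiSSet) (m : ℕ) : LatchIx m ⥤ SSet.{0} where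
  obj a := X.obj (op ⦋a.k⦌)
  map {a b} τ := X.map τ.1.op
  map_id a := by
    try dsimp
    rw [show ((𝟙 a : a ⟶ a) : { τ : (⦋a.k⦌ : SimplexCategory) ⟶ ⦋a.k⦌ // a.σ ≫ τ = a.σ }).1
      = 𝟙 (⦋a.k⦌ : SimplexCategory) from rfl, op_id, X.map_id]
  map_comp {a b c} f g := by
    try dsimp
    rw [show ((f ≫ g : a ⟶ c) :
        { τ : (⦋c.k⦌ : SimplexCategory) ⟶ ⦋a.k⦌ // c.σ ≫ τ = a.σ }).1 = g.1 ≫ f.1 from rfl,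
      op_comp, X.map_comp]

/-- The canonical cocone on the latching diagram with vertex `X_m`. -/
def latchCocone (X : BiSSet) (m : ℕ) : Cocone (latchDiagram X m) where
  pt := X.obj (op ⦋m⦌)
  ι :=
    { app := fun a => X.map a.σ.op
      naturality := fun a b τ => by
        dsimp [latchDiagram]
        rw [Category.comp_id, ← X.map_comp, ← op_comp, τ.2] }

/-- The `m`-th latching object `L_m X` of a bisimplicial set. -/
noncomputable def latchObj (X : BiSSet) (m : ℕ) : SSet.{0} :=
  colimit (latchDiagram X m)

/-- The canonical map `L_m X → X_m`. -/
noncomputable def latchMap (X : BiSSet) (m : ℕ) : latchObj X m ⟶ X.obj (op ⦋m⦌) :=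
  colimit.desc _ (latchCocone X m)

/-- The map `L_m X → L_m Y` induced by `f : X → Y`. -/
noncomputable def latchHom {X Y : BiSSet} (f : X ⟶ Y) (m : ℕ) :
    latchObj X m ⟶ latchObj Y m :=
  colimit.desc _
    { pt := latchObj Y m
      ι :=
        { app := fun a => f.app (op ⦋a.k⦌) ≫ colimit.ι (latchDiagram Y m) a
          naturality := fun a b τ => by
            show (latchDiagram X m).map τ ≫ (f.app (op ⦋b.k⦌) ≫ colimit.ι (latchDiagram Y m) b)
              = (f.app (op ⦋a.k⦌) ≫ colimit.ι (latchDiagram Y m) a) ≫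
                  𝟙 (colimit (latchDiagram Y m))
            erw [Category.comp_id, ← Category.assoc,
              show (latchDiagram X m).map τ ≫ f.app (op ⦋b.k⦌)
                = f.app (op ⦋a.k⦌) ≫ (latchDiagram Y m).map τ from f.naturality τ.1.op,
              Category.assoc, colimit.w (latchDiagram Y m) τ]
            rfl } }

lemma latch_comm {X Y : BiSSet} (f : X ⟶ Y) (m : ℕ) :
    latchMap X m ≫ f.app (op ⦋m⦌) = latchHom f m ≫ latchMap Y m := by
  apply colimit.hom_ext
  intro a
  simp only [latchMap, latchHom, latchCocone, colimit.ι_desc, colimit.ι_desc_assoc,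
    Category.assoc]
  erw [colimit.ι_desc_assoc, colimit.ι_desc_assoc, Category.assoc, colimit.ι_desc]
  exact f.naturality a.σ.op

/-- The relative latching map `X_m ⊔_{L_m X} L_m Y → Y_m` of a map `f : X → Y` of
bisimplicial sets. -/
noncomputable def relLatchMap {X Y : BiSSet} (f : X ⟶ Y) (m : ℕ) :
    pushout (latchMap X m) (latchHom f m) ⟶ Y.obj (op ⦋m⦌) :=
  pushout.desc (f.app (op ⦋m⦌)) (latchMap Y m) (latch_comm f m)

/-- `f` is a Reedy cofibration (w.r.t. the Kan–Quillen model structure, whose cofibrations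
are the monomorphisms) if all its relative latching maps are monomorphisms. -/
def IsReedyCofibration {X Y : BiSSet} (f : X ⟶ Y) : Prop :=
  ∀ m : ℕ, Mono (relLatchMap f m)

/-- A simplex of `X_m` (in some simplicial degree `n`) is degenerate if it is in the image
of one of the degeneracy maps `s_i : X_{m-1} → X_m`; the degenerate simplices form the
image of the canonical map `L_m X → X_m` from the latching object. -/
def IsDeg (X : BiSSet) : ∀ (m : ℕ) {n : SimplexCategoryᵒᵖ}, (X.obj (op ⦋m⦌)).obj n → Prop :=
  fun m {n} t => match m, n, t with
  | 0, _, _ => False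
  | (k + 1), n, t => ∃ (i : Fin (k + 1)) (s : (X.obj (op ⦋k⦌)).obj n),
      (X.map (SimplexCategory.σ i).op).app n s = t

section EZ

open SimplexCategory

/-- Degeneracy predicate for a plain simplicial set. -/
def ZDeg (Z : SSet.{0}) : ∀ (m : ℕ), Z.obj (op ⦋m⦌) → Prop :=
  fun m t => match m, t with
  | 0, _ => False
  | (k + 1), t => ∃ (i : Fin (k + 1)) (s : Z.obj (op ⦋k⦌)),
      Z.map (SimplexCategory.σ i).op s = t

lemma zdeg_of_epi_factor (Z : SSet.{0}) {m : ℕ} {Δ' : SimplexCategory}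
    (e : (⦋m⦌ : SimplexCategory) ⟶ Δ') [he : Epi e] (h : Δ'.len < m)
    (w : Z.obj (op Δ')) : ZDeg Z m (Z.map e.op w) := by
  obtain _ | m := m
  · omega
  · have hni : ¬ Function.Injective e.toOrderHom := by
      intro hinj
      have : Mono e := SimplexCategory.mono_iff_injective.mpr hinj
      have := SimplexCategory.len_le_of_mono e
      simp only [SimplexCategory.len_mk] at this
      omega
    obtain ⟨i, θ, he'⟩ := SimplexCategory.eq_σ_comp_of_not_injective e hni
    subst he'
    exact ⟨i, Z.map θ.op w, by rw [op_comp, Z.map_comp]; rfl⟩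

lemma ez_exists (Z : SSet.{0}) : ∀ (m : ℕ) (t : Z.obj (op ⦋m⦌)),
    ∃ (k : ℕ) (e : (⦋m⦌ : SimplexCategory) ⟶ ⦋k⦌) (_ : Epi e) (w : Z.obj (op ⦋k⦌)),
      ¬ ZDeg Z k w ∧ Z.map e.op w = t := by
  intro m
  induction m with
  | zero =>
    intro t
    exact ⟨0, 𝟙 _, inferInstance, t, fun h => h, by rw [op_id, Z.map_id]; rfl⟩
  | succ k ih =>
    intro t
    by_cases h : ZDeg Z (k + 1) t
    · obtain ⟨i, s, rfl⟩ := h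
      obtain ⟨j, e, he, w, hw, rfl⟩ := ih s
      haveI := he
      exact ⟨j, SimplexCategory.σ i ≫ e, epi_comp _ _, w, hw,
        by rw [op_comp, Z.map_comp]; rfl⟩
    · exact ⟨k + 1, 𝟙 _, inferInstance, t, h, by rw [op_id, Z.map_id]; rfl⟩

lemma exists_section {m k : ℕ} (e : (⦋m⦌ : SimplexCategory) ⟶ ⦋k⦌)
    (hs : Function.Surjective e.toOrderHom) (x : Fin (m + 1)) :
    ∃ s : (⦋k⦌ : SimplexCategory) ⟶ ⦋m⦌, s ≫ e = 𝟙 _ ∧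
      s.toOrderHom (e.toOrderHom x) = x := by
  classical
  let g : Fin (k + 1) → Fin (m + 1) :=
    fun j => if j = e.toOrderHom x then x else (hs j).choose
  have hg : ∀ j, e.toOrderHom (g j) = j := by
    intro j
    by_cases hj : j = e.toOrderHom x
    · simp only [g]
      rw [if_pos hj]
      exact hj.symm
    · simp only [g]
      rw [if_neg hj]
      exact (hs j).choose_spec
  have hmono : Monotone g := by
    intro j j' hjj'
    by_contra hc
    push_neg at hc
    have h2 := e.toOrderHom.monotone hc.le
    rw [hg, hg] at h2
    have : j = j' := le_antisymm hjj' h2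
    subst this
    exact lt_irrefl _ hc
  refine ⟨SimplexCategory.mkHom ⟨g, hmono⟩, ?_, ?_⟩
  · apply SimplexCategory.Hom.ext
    apply OrderHom.ext
    funext j
    show e.toOrderHom (g j) = j
    exact hg j
  · simp [SimplexCategory.mkHom, g]

lemma nondeg_mono (Z : SSet.{0}) {k : ℕ} {Δ' : SimplexCategory}
    (w : Z.obj (op ⦋k⦌)) (hw : ¬ ZDeg Z k w) (g : (⦋k⦌ : SimplexCategory) ⟶ Δ')
    (w' : Z.obj (op Δ')) (h : Z.map g.op w' = w) : Mono g := by
  have fac : factorThruImage g ≫ image.ι g = g := image.fac g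
  by_cases hlen : (image g).len < k
  · exfalso
    apply hw
    rw [← h, ← fac, op_comp, Z.map_comp]
    exact zdeg_of_epi_factor Z (factorThruImage g) hlen (Z.map (image.ι g).op w')
  · have hle : (image g).len ≤ k := SimplexCategory.len_le_of_epi
      (factorThruImage g)
    have hbij : Function.Bijective (factorThruImage g).toOrderHom := by
      have hsurj := SimplexCategory.epi_iff_surjective.mp
        (inferInstance : Epi (factorThruImage g))
      have hle' : (image g).len ≤ k := hle
      have heq : (image g).len = k := le_antisymm hle' (not_lt.mp hlen)
      rw [Fintype.bijective_iff_surjective_and_card]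
      refine ⟨hsurj, ?_⟩
      simp only [Fintype.card_fin, SimplexCategory.len_mk, heq]
    haveI : IsIso (factorThruImage g) := SimplexCategory.isIso_of_bijective hbij
    rw [← fac]
    exact mono_comp _ _

lemma ez_unique_aux (Z : SSet.{0}) {m k k' : ℕ}
    (e : (⦋m⦌ : SimplexCategory) ⟶ ⦋k⦌)
    (e' : (⦋m⦌ : SimplexCategory) ⟶ ⦋k'⦌)
    (w : Z.obj (op ⦋k⦌)) (hw : ¬ ZDeg Z k w)
    (w' : Z.obj (op ⦋k'⦌))
    (heq : Z.map e.op w = Z.map e'.op w')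
    {s : (⦋k⦌ : SimplexCategory) ⟶ ⦋m⦌} (hs : s ≫ e = 𝟙 _) :
    Mono (s ≫ e') ∧ Z.map (s ≫ e').op w' = w := by
  have hw' : Z.map (s ≫ e').op w' = w := by
    rw [op_comp, Z.map_comp]
    show Z.map s.op (Z.map e'.op w') = w
    rw [← heq]
    show (Z.map e.op ≫ Z.map s.op) w = w
    rw [← Z.map_comp, ← op_comp, hs, op_id, Z.map_id]
    rfl
  exact ⟨nondeg_mono Z w hw _ w' hw', hw'⟩

lemma ez_unique_len (Z : SSet.{0}) {m k k' : ℕ}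
    (e : (⦋m⦌ : SimplexCategory) ⟶ ⦋k⦌) (he : Epi e)
    (e' : (⦋m⦌ : SimplexCategory) ⟶ ⦋k'⦌) (he' : Epi e')
    (w : Z.obj (op ⦋k⦌)) (hw : ¬ ZDeg Z k w)
    (w' : Z.obj (op ⦋k'⦌)) (hw' : ¬ ZDeg Z k' w')
    (heq : Z.map e.op w = Z.map e'.op w') : k = k' := by
  obtain ⟨s, hs, -⟩ := exists_section e (SimplexCategory.epi_iff_surjective.mp he) 0
  obtain ⟨s', hs', -⟩ := exists_section e' (SimplexCategory.epi_iff_surjective.mp he') 0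
  have h1 := @SimplexCategory.len_le_of_mono _ _ _ (ez_unique_aux Z e e' w hw w' heq hs).1
  have h2 := @SimplexCategory.len_le_of_mono _ _ _ (ez_unique_aux Z e' e w' hw' w heq.symm hs').1
  have h1' : k ≤ k' := h1
  have h2' : k' ≤ k := h2
  omega

lemma ez_unique (Z : SSet.{0}) {m k : ℕ}
    (e e' : (⦋m⦌ : SimplexCategory) ⟶ ⦋k⦌) (he : Epi e)
    (w w' : Z.obj (op ⦋k⦌)) (hw : ¬ ZDeg Z k w)
    (heq : Z.map e.op w = Z.map e'.op w') : e = e' ∧ w = w' := by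
  have key : ∀ x : Fin (m + 1), ∃ s : (⦋k⦌ : SimplexCategory) ⟶ ⦋m⦌,
      s.toOrderHom (e.toOrderHom x) = x ∧ s ≫ e' = 𝟙 _ ∧
        Z.map (s ≫ e').op w' = w := by
    intro x
    obtain ⟨s, hs, hsx⟩ := exists_section e (SimplexCategory.epi_iff_surjective.mp he) x
    obtain ⟨hmono, hval⟩ := ez_unique_aux Z e e' w hw w' heq hs
    haveI := hmono
    exact ⟨s, hsx, SimplexCategory.eq_id_of_mono _, hval⟩
  constructor
  · apply SimplexCategory.Hom.ext
    apply OrderHom.ext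
    funext x
    obtain ⟨s, hsx, hid, -⟩ := key x
    have h1 : e'.toOrderHom (s.toOrderHom (e.toOrderHom x)) = e.toOrderHom x :=
      congrArg (fun (f : (⦋k⦌ : SimplexCategory) ⟶ ⦋k⦌) =>
        f.toOrderHom (e.toOrderHom x)) hid
    rw [hsx] at h1
    exact h1.symm
  · obtain ⟨s, -, hid, hval⟩ := key 0
    rw [hid, op_id, Z.map_id] at hval
    exact hval.symm

end EZ

section Latch

/-- The evaluation of a bisimplicial set at simplicial degree `n`, as a simplicial set. -/
abbrev bEval (W : BiSSet) (n : SimplexCategoryᵒᵖ) : SSet.{0} :=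
  W ⋙ (evaluation SimplexCategoryᵒᵖ (Type 0)).obj n

lemma latch_jointly (W : BiSSet) (m : ℕ) (n : SimplexCategoryᵒᵖ)
    (p : (latchObj W m).obj n) :
    ∃ (a : LatchIx m) (z : (W.obj (op ⦋a.k⦌)).obj n),
      (colimit.ι (latchDiagram W m) a).app n z = p := by
  have hc := isColimitOfPreserves ((evaluation SimplexCategoryᵒᵖ (Type 0)).obj n)
    (colimit.isColimit (latchDiagram W m))
  obtain ⟨a, z, hz⟩ := Types.jointly_surjective _ hc p
  exact ⟨a, z, hz⟩

lemma latch_img (W : BiSSet) (m : ℕ) (n : SimplexCategoryᵒᵖ)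
    (a : LatchIx m) (z : (W.obj (op ⦋a.k⦌)).obj n) :
    (latchMap W m).app n ((colimit.ι (latchDiagram W m) a).app n z)
      = (W.map a.σ.op).app n z := by
  have h := colimit.ι_desc (latchCocone W m) a
  exact congrFun (congrArg (fun f => f.app n) h) z

lemma latch_reduce (W : BiSSet) (m : ℕ) (n : SimplexCategoryᵒᵖ)
    (a : LatchIx m) (z : (W.obj (op ⦋a.k⦌)).obj n) :
    ∃ (b : LatchIx m) (w : (W.obj (op ⦋b.k⦌)).obj n),
      (colimit.ι (latchDiagram W m) b).app n w
          = (colimit.ι (latchDiagram W m) a).app n z ∧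
        Epi b.σ ∧ ¬ ZDeg (bEval W n) b.k w ∧
        (bEval W n).map b.σ.op w = (bEval W n).map a.σ.op z := by
  obtain ⟨j, e, he, w, hw, hwz⟩ := ez_exists (bEval W n) a.k z
  haveI := he
  have hjk : j ≤ a.k := SimplexCategory.len_le_of_epi e
  have hepi : Epi (a.σ ≫ e) := by
    haveI : Epi a.σ := SimplexCategory.epi_iff_surjective.mpr a.surj
    exact epi_comp _ _
  refine ⟨⟨j, lt_of_le_of_lt hjk a.hk, a.σ ≫ e,
      SimplexCategory.epi_iff_surjective.mp hepi⟩, w, ?_, hepi, hw, ?_⟩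
  · have hcw := colimit.w (latchDiagram W m)
      (⟨e, rfl⟩ : (⟨j, lt_of_le_of_lt hjk a.hk, a.σ ≫ e,
        SimplexCategory.epi_iff_surjective.mp hepi⟩ : LatchIx m) ⟶ a)
    have h1 := congrFun (congrArg (fun f => f.app n) hcw) w
    exact h1.symm.trans (congrArg ((colimit.ι (latchDiagram W m) a).app n) hwz)
  · show (bEval W n).map (a.σ ≫ e).op w = (bEval W n).map a.σ.op z
    rw [op_comp, Functor.map_comp]
    exact congrArg ((bEval W n).map a.σ.op) hwz

lemma latchMap_app_injective (W : BiSSet) (m : ℕ) (n : SimplexCategoryᵒᵖ) :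
    Function.Injective ((latchMap W m).app n) := by
  intro p q hpq
  obtain ⟨a, z, rfl⟩ := latch_jointly W m n p
  obtain ⟨a', z', rfl⟩ := latch_jointly W m n q
  obtain ⟨b, w, hb, hepi, hnd, himg⟩ := latch_reduce W m n a z
  obtain ⟨b', w', hb', hepi', hnd', himg'⟩ := latch_reduce W m n a' z'
  rw [← hb, ← hb']
  have himgeq : (bEval W n).map b.σ.op w = (bEval W n).map b'.σ.op w' := by
    rw [himg, himg']
    exact (latch_img W m n a z).symm.trans (hpq.trans (latch_img W m n a' z'))
  have hk : b.k = b'.k :=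
    ez_unique_len (bEval W n) b.σ hepi b'.σ hepi' w hnd w' hnd' himgeq
  obtain ⟨k1, hk1, s1, su1⟩ := b
  obtain ⟨k2, hk2, s2, su2⟩ := b'
  dsimp only at hk
  subst hk
  obtain ⟨hσ, hww⟩ := ez_unique (bEval W n) s1 s2 hepi w w' hnd himgeq
  subst hσ
  subst hww
  rfl

lemma latch_img_zdeg (W : BiSSet) (m : ℕ) (n : SimplexCategoryᵒᵖ)
    (p : (latchObj W m).obj n) :
    ZDeg (bEval W n) m ((latchMap W m).app n p) := by
  obtain ⟨a, z, rfl⟩ := latch_jointly W m n p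
  rw [latch_img]
  haveI : Epi a.σ := SimplexCategory.epi_iff_surjective.mpr a.surj
  exact zdeg_of_epi_factor (bEval W n) a.σ a.hk z

lemma zdeg_exists_preimage (W : BiSSet) (m : ℕ) (n : SimplexCategoryᵒᵖ)
    (t : (W.obj (op ⦋m⦌)).obj n) (h : ZDeg (bEval W n) m t) :
    ∃ p, (latchMap W m).app n p = t := by
  cases m with
  | zero => exact h.elim
  | succ k =>
    obtain ⟨i, s, hs⟩ := h
    refine ⟨(colimit.ι (latchDiagram W (k + 1))
      ⟨k, Nat.lt_succ_self k, SimplexCategory.σ i,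
        SimplexCategory.epi_iff_surjective.mp inferInstance⟩).app n s, ?_⟩
    rw [latch_img]
    exact hs

lemma zdeg_iff {Z Z' : SSet.{0}} (φ : Z ⟶ Z')
    (hinj : ∀ d, Function.Injective (φ.app d)) (m : ℕ) (t : Z.obj (op ⦋m⦌)) :
    ZDeg Z m t ↔ ZDeg Z' m (φ.app _ t) := by
  cases m with
  | zero => exact Iff.rfl
  | succ k =>
    constructor
    · rintro ⟨i, s, rfl⟩
      exact ⟨i, φ.app _ s,
        (NatTrans.naturality_apply φ (SimplexCategory.σ i).op s).symm⟩
    · rintro ⟨i, y, hy⟩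
      refine ⟨i, Z.map (SimplexCategory.δ i.castSucc).op t, ?_⟩
      apply hinj (op ⦋k + 1⦌)
      have h1 := NatTrans.naturality_apply φ (SimplexCategory.σ i).op
        (Z.map (SimplexCategory.δ i.castSucc).op t)
      have h2 := NatTrans.naturality_apply φ (SimplexCategory.δ i.castSucc).op t
      have h3 : Z'.map (SimplexCategory.δ i.castSucc).op
          (Z'.map (SimplexCategory.σ i).op y) = y := by
        rw [← types_comp_apply (Z'.map (SimplexCategory.σ i).op)
            (Z'.map (SimplexCategory.δ i.castSucc).op),
          ← Z'.map_comp, ← op_comp, SimplexCategory.δ_comp_σ_self, op_id, Z'.map_id,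
          types_id_apply]
      rw [h1, h2, ← hy, h3]

lemma isDeg_iff_zdeg (W : BiSSet) (m : ℕ) (n : SimplexCategoryᵒᵖ)
    (t : (W.obj (op ⦋m⦌)).obj n) : IsDeg W m t ↔ ZDeg (bEval W n) m t := by
  cases m with
  | zero => exact Iff.rfl
  | succ k => exact Iff.rfl

end Latch

/-- Let `f : X → Y` be a map of bisimplicial sets which is a monomorphism in each degree.
Then for each `m` the intersection of `X_m` and `L_m Y` inside `Y_m` is exactly `L_m X`
(identifying the latching objects with the degenerate simplices): a simplex of `X_m`
whose image in `Y_m` is degenerate is itself degenerate, and conversely.  Consequently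
the relative latching map `X_m ⊔_{L_m X} L_m Y → Y_m` is a monomorphism. -/
theorem latching_intersection_and_relative_latching_mono
    {X Y : BiSSet} (f : X ⟶ Y) (hf : ∀ d : SimplexCategoryᵒᵖ, Mono (f.app d)) :
    (∀ (m : ℕ) (n : SimplexCategoryᵒᵖ) (t : (X.obj (op ⦋m⦌)).obj n),
      IsDeg X m t ↔ IsDeg Y m ((f.app (op ⦋m⦌)).app n t)) ∧
    (∀ m : ℕ, Mono (relLatchMap f m)) := by
  have hiff : ∀ (m : ℕ) (n : SimplexCategoryᵒᵖ) (t : (X.obj (op ⦋m⦌)).obj n),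
      IsDeg X m t ↔ IsDeg Y m ((f.app (op ⦋m⦌)).app n t) := by
    intro m n t
    have hinj : ∀ d, Function.Injective
        ((Functor.whiskerRight f ((evaluation SimplexCategoryᵒᵖ (Type 0)).obj n)).app d) := by
      intro d
      exact (mono_iff_injective _).mp ((NatTrans.mono_iff_mono_app (f.app d)).mp (hf d) n)
    rw [isDeg_iff_zdeg X m n t, isDeg_iff_zdeg Y m n]
    exact zdeg_iff (Functor.whiskerRight f ((evaluation SimplexCategoryᵒᵖ (Type 0)).obj n)) hinj m t
  refine ⟨hiff, fun m => ?_⟩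
  suffices h : ∀ (n : SimplexCategoryᵒᵖ), Mono ((relLatchMap f m).app n) by
    haveI := h
    exact NatTrans.mono_of_mono_app _
  intro n
  rw [mono_iff_injective]
  have hYinj := latchMap_app_injective Y m n
  have hfinj : Function.Injective ((f.app (op ⦋m⦌)).app n) :=
    (mono_iff_injective _).mp ((NatTrans.mono_iff_mono_app (f.app (op ⦋m⦌))).mp (hf _) n)
  have classify : ∀ p : (pushout (latchMap X m) (latchHom f m)).obj n,
      (∃ a, (pushout.inl (latchMap X m) (latchHom f m)).app n a = p) ∨
      (∃ l, (pushout.inr (latchMap X m) (latchHom f m)).app n l = p) := by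
    intro p
    have hc := isColimitOfPreserves ((evaluation SimplexCategoryᵒᵖ (Type 0)).obj n)
      (colimit.isColimit (span (latchMap X m) (latchHom f m)))
    obtain ⟨j, y, hy⟩ := Types.jointly_surjective _ hc p
    cases j with
    | none =>
      left
      have hcw := ConcreteCategory.congr_hom (congrArg (fun (g : _ ⟶ (pushout (latchMap X m) (latchHom f m)))
        => g.app n)
        (colimit.w (span (latchMap X m) (latchHom f m)) WalkingSpan.Hom.fst)) y
      exact ⟨(latchMap X m).app n y, hcw.trans hy⟩
    | some j' =>
      cases j' with
      | left => exact Or.inl ⟨y, hy⟩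
      | right => exact Or.inr ⟨y, hy⟩
  have himg : ∀ (a : (X.obj (op ⦋m⦌)).obj n) (l : (latchObj Y m).obj n),
      (f.app (op ⦋m⦌)).app n a = (latchMap Y m).app n l →
      (pushout.inl (latchMap X m) (latchHom f m)).app n a
        = (pushout.inr (latchMap X m) (latchHom f m)).app n l := by
    intro a l hal
    have hdegY : ZDeg (bEval Y n) m ((f.app (op ⦋m⦌)).app n a) := by
      rw [hal]; exact latch_img_zdeg Y m n l
    have hdegX : IsDeg X m a := (hiff m n a).mpr ((isDeg_iff_zdeg Y m n _).mpr hdegY)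
    obtain ⟨p0, hp0⟩ := zdeg_exists_preimage X m n a ((isDeg_iff_zdeg X m n a).mp hdegX)
    have e1 : (f.app (op ⦋m⦌)).app n ((latchMap X m).app n p0)
        = (latchMap Y m).app n ((latchHom f m).app n p0) :=
      ConcreteCategory.congr_hom (congrArg (fun (g : latchObj X m ⟶ Y.obj (op ⦋m⦌)) => g.app n)
        (latch_comm f m)) p0
    rw [hp0] at e1
    have hHl : (latchHom f m).app n p0 = l := hYinj (e1.symm.trans hal)
    have e2 : (pushout.inl (latchMap X m) (latchHom f m)).app n ((latchMap X m).app n p0)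
        = (pushout.inr (latchMap X m) (latchHom f m)).app n ((latchHom f m).app n p0) :=
      ConcreteCategory.congr_hom (congrArg (fun (g : latchObj X m ⟶ pushout (latchMap X m) (latchHom f m))
        => g.app n) pushout.condition) p0
    rw [hp0, hHl] at e2
    exact e2
  have hinl : ∀ a, (relLatchMap f m).app n
      ((pushout.inl (latchMap X m) (latchHom f m)).app n a) = (f.app (op ⦋m⦌)).app n a :=
    fun a => ConcreteCategory.congr_hom (congrArg (fun (g : _ ⟶ Y.obj (op ⦋m⦌)) => g.app n)
      (pushout.inl_desc (f.app (op ⦋m⦌)) (latchMap Y m) (latch_comm f m))) a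
  have hinr : ∀ l, (relLatchMap f m).app n
      ((pushout.inr (latchMap X m) (latchHom f m)).app n l) = (latchMap Y m).app n l :=
    fun l => ConcreteCategory.congr_hom (congrArg (fun (g : _ ⟶ Y.obj (op ⦋m⦌)) => g.app n)
      (pushout.inr_desc (f.app (op ⦋m⦌)) (latchMap Y m) (latch_comm f m))) l
  intro p q hpq
  rcases classify p with ⟨a, rfl⟩ | ⟨l, rfl⟩ <;> rcases classify q with ⟨a', rfl⟩ | ⟨l', rfl⟩
  · rw [hinl, hinl] at hpq
    rw [hfinj hpq]
  · rw [hinl, hinr] at hpq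
    exact himg a l' hpq
  · rw [hinr, hinl] at hpq
    exact (himg a' l hpq.symm).symm
  · rw [hinr, hinr] at hpq
    rw [hYinj hpq]
end
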